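/- The map Λ^∨ defined by Λ^∨(μ)([0,t]) = max{1 + log μ([0,t]), 0} (with value 0 when μ([0,t]) = 0) sends probability distribution functions on [0,∞) to probability distribution functions, and satisfies Λ^∨(μ∨ν) = Λ^∨(μ) ⊞∨ Λ^∨(ν), where (κ ⊞∨ ρ)([0,t]) = max{κ([0,t]) + ρ([0,t]) - 1, 0} is the free max-convolution. -/

import Mathlib

open MeasureTheory Set Filter Real Topology

/-- The map on distribution-function values associated with `Λ^∨`:
`x ↦ max{1 + log x, 0}`, with the convention that the value is `0` when `x = 0`. -/
noncomputable def lambdaMaxDF (x : ℝ) : ℝ :=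
  if x = 0 then 0 else max (1 + Real.log x) 0

/-- A continuous version of `lambdaMaxDF`, agreeing with it on `[0, ∞)`. -/
noncomputable def lambdaMaxDF' (x : ℝ) : ℝ :=
  max (1 + Real.log (max x (Real.exp (-1)))) 0

lemma lambdaMaxDF_eq (x : ℝ) (hx : 0 ≤ x) : lambdaMaxDF x = lambdaMaxDF' x := by
  unfold lambdaMaxDF lambdaMaxDF'
  rcases le_or_gt x (Real.exp (-1)) with h | h
  · rw [max_eq_right h]
    have : (1 : ℝ) + Real.log (Real.exp (-1)) = 0 := by rw [Real.log_exp]; ring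
    rw [this, max_self]
    split_ifs with h0
    · rfl
    · have hx0 : 0 < x := lt_of_le_of_ne hx (Ne.symm h0)
      have : Real.log x ≤ Real.log (Real.exp (-1)) := Real.log_le_log hx0 h
      rw [Real.log_exp] at this
      rw [max_eq_right (by linarith)]
  · have hx0 : 0 < x := lt_trans (Real.exp_pos _) h
    rw [max_eq_left h.le, if_neg hx0.ne']

lemma lambdaMaxDF'_nonneg (x : ℝ) : 0 ≤ lambdaMaxDF' x := le_max_right _ _

lemma lambdaMaxDF'_continuous : Continuous lambdaMaxDF' := by
  have h : Continuous fun x : ℝ => Real.log (max x (Real.exp (-1))) := by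
    exact (continuous_id.max continuous_const).log
      fun x => (lt_max_of_lt_right (Real.exp_pos _)).ne'
  exact (continuous_const.add h).max continuous_const

lemma lambdaMaxDF'_mono : Monotone lambdaMaxDF' := by
  intro x y hxy
  apply max_le_max _ le_rfl
  apply add_le_add le_rfl
  exact Real.log_le_log (lt_max_of_lt_right (Real.exp_pos _))
    (max_le_max hxy le_rfl)

lemma lambdaMaxDF_le_one (x : ℝ) (hx0 : 0 ≤ x) (hx1 : x ≤ 1) : lambdaMaxDF x ≤ 1 := by
  unfold lambdaMaxDF
  split_ifs with h
  · norm_num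
  · have : Real.log x ≤ 0 := Real.log_nonpos hx0 hx1
    apply max_le (by linarith) zero_le_one

lemma lambdaMaxDF_nonneg (x : ℝ) : 0 ≤ lambdaMaxDF x := by
  unfold lambdaMaxDF; split_ifs <;> simp

lemma lambdaMaxDF_mul (a b : ℝ) (ha : 0 ≤ a) (ha1 : a ≤ 1) (hb : 0 ≤ b) (hb1 : b ≤ 1) :
    lambdaMaxDF (a * b) = max (lambdaMaxDF a + lambdaMaxDF b - 1) 0 := by
  rcases eq_or_lt_of_le ha with rfl | ha0
  · simp only [zero_mul]
    have h1 : lambdaMaxDF 0 = 0 := by simp [lambdaMaxDF]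
    rw [h1, max_eq_right (by have := lambdaMaxDF_le_one b hb hb1; linarith)]
  rcases eq_or_lt_of_le hb with rfl | hb0
  · simp only [mul_zero]
    have h1 : lambdaMaxDF 0 = 0 := by simp [lambdaMaxDF]
    rw [h1, max_eq_right (by have := lambdaMaxDF_le_one a ha ha1; linarith)]
  have hab : 0 < a * b := mul_pos ha0 hb0
  unfold lambdaMaxDF
  rw [if_neg hab.ne', if_neg ha0.ne', if_neg hb0.ne', Real.log_mul ha0.ne' hb0.ne']
  have hla : Real.log a ≤ 0 := Real.log_nonpos ha (by linarith)
  have hlb : Real.log b ≤ 0 := Real.log_nonpos hb (by linarith)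
  rcases le_or_gt 0 (1 + Real.log a) with h1 | h1 <;>
    rcases le_or_gt 0 (1 + Real.log b) with h2 | h2
  · rw [max_eq_left h1, max_eq_left h2]
    congr 1; ring
  · rw [max_eq_left h1, max_eq_right h2.le, max_eq_right (by linarith),
      max_eq_right (by linarith)]
  · rw [max_eq_right h1.le, max_eq_left h2, max_eq_right (by linarith),
      max_eq_right (by linarith)]
  · rw [max_eq_right h1.le, max_eq_right h2.le, max_eq_right (by linarith),
      max_eq_right (by linarith)]

theorem lambdaMax_hom (μ ν ρ : Measure ℝ)
    [IsProbabilityMeasure μ] [IsProbabilityMeasure ν] [IsProbabilityMeasure ρ]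
    (hμ : μ (Set.Iio 0) = 0) (hν : ν (Set.Iio 0) = 0) (hρ : ρ (Set.Iio 0) = 0)
    (hconv : ∀ t : ℝ, 0 ≤ t →
      (ρ (Set.Iic t)).toReal = (μ (Set.Iic t)).toReal * (ν (Set.Iic t)).toReal) :
    (∃ κ : Measure ℝ, IsProbabilityMeasure κ ∧ κ (Set.Iio 0) = 0 ∧
      ∀ t : ℝ, 0 ≤ t → (κ (Set.Iic t)).toReal = lambdaMaxDF ((μ (Set.Iic t)).toReal)) ∧
    (∀ t : ℝ, 0 ≤ t →
      lambdaMaxDF ((ρ (Set.Iic t)).toReal) =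
        max (lambdaMaxDF ((μ (Set.Iic t)).toReal) +
             lambdaMaxDF ((ν (Set.Iic t)).toReal) - 1) 0) := by
  constructor
  · -- construct κ via a Stieltjes function
    set g : ℝ → ℝ := fun t => lambdaMaxDF' (ProbabilityTheory.cdf μ t) with hg
    have hgmono : Monotone g := lambdaMaxDF'_mono.comp (ProbabilityTheory.cdf μ).mono
    have hgrc : ∀ x, ContinuousWithinAt g (Set.Ici x) x := fun x =>
      (lambdaMaxDF'_continuous.continuousAt).comp_continuousWithinAt
        ((ProbabilityTheory.cdf μ).right_continuous x)
    set s : StieltjesFunction ℝ := ⟨g, hgmono, hgrc⟩ with hs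
    have h0 : lambdaMaxDF' 0 = 0 := by
      rw [← lambdaMaxDF_eq 0 le_rfl]; simp [lambdaMaxDF]
    have h1 : lambdaMaxDF' 1 = 1 := by
      rw [← lambdaMaxDF_eq 1 zero_le_one]; simp [lambdaMaxDF]
    have hbot : Tendsto s atBot (𝓝 0) := by
      have := (lambdaMaxDF'_continuous.tendsto 0).comp
        (ProbabilityTheory.tendsto_cdf_atBot μ)
      rwa [h0] at this
    have htop : Tendsto s atTop (𝓝 1) := by
      have := (lambdaMaxDF'_continuous.tendsto 1).comp
        (ProbabilityTheory.tendsto_cdf_atTop μ)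
      rwa [h1] at this
    have huniv : s.measure Set.univ = 1 := by
      rw [s.measure_univ hbot htop]; norm_num
    have hIic : ∀ t : ℝ, s.measure (Set.Iic t) = ENNReal.ofReal (g t) := by
      intro t
      rw [s.measure_Iic hbot]
      simp
      rfl
    have hzero : ∀ t : ℝ, t < 0 → g t = 0 := by
      intro t ht
      have hcdf : ProbabilityTheory.cdf μ t = 0 := by
        rw [ProbabilityTheory.cdf_eq_real, measureReal_def]
        have : μ (Set.Iic t) ≤ μ (Set.Iio 0) :=
          measure_mono (fun x hx => lt_of_le_of_lt hx ht)
        rw [hμ] at this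
        simp [le_antisymm this (by simp)]
      simp only [hg, hcdf, h0]
    have hIio : s.measure (Set.Iio 0) = 0 := by
      have hll : Function.leftLim g 0 = 0 := by
        apply leftLim_eq_of_tendsto (α := ℝ) (β := ℝ)
        apply Tendsto.congr' _ tendsto_const_nhds
        filter_upwards [self_mem_nhdsWithin] with x hx
        exact (hzero x hx).symm
      have hIci : s.measure (Set.Ici 0) = 1 := by
        rw [s.measure_Ici htop, hll]
        norm_num
      have hsum : s.measure (Set.Ici 0) + s.measure (Set.Iio 0) = 1 := by
        have hc : Set.Iio (0:ℝ) = (Set.Ici 0)ᶜ := (Set.compl_Ici).symm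
        rw [hc, measure_add_measure_compl measurableSet_Ici, huniv]
      rw [hIci] at hsum
      have : (1:ENNReal) + s.measure (Set.Iio 0) = 1 + 0 := by simpa using hsum
      exact (ENNReal.add_right_inj (by simp)).mp this
    refine ⟨s.measure, ⟨huniv⟩, hIio, fun t ht => ?_⟩
    rw [hIic t, ENNReal.toReal_ofReal]
    · simp only [hg]
      rw [ProbabilityTheory.cdf_eq_real, measureReal_def, lambdaMaxDF_eq _ ENNReal.toReal_nonneg]
    · exact lambdaMaxDF'_nonneg _
  · intro t ht
    rw [hconv t ht]
    have hm1 : (μ (Set.Iic t)).toReal ≤ 1 := by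
      apply ENNReal.toReal_le_of_le_ofReal zero_le_one
      simpa using prob_le_one (μ := μ) (s := Set.Iic t)
    have hn1 : (ν (Set.Iic t)).toReal ≤ 1 := by
      apply ENNReal.toReal_le_of_le_ofReal zero_le_one
      simpa using prob_le_one (μ := ν) (s := Set.Iic t)
    exact lambdaMaxDF_mul _ _ ENNReal.toReal_nonneg hm1 ENNReal.toReal_nonneg hn1
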